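/- Let G be a finite EPPO-group whose Sylow 2-subgroups are generalized quaternion. Then |G| = 2^α q^β for some odd prime q and β ≥ 0, and G has a normal Sylow q-subgroup; in particular G is solvable. -/

import Mathlib

/-- A group is an EPPO-group if every element has prime power order. -/
def IsEPPOGroup (G : Type*) [Group G] : Prop :=
  ∀ g : G, ∃ (p n : ℕ), p.Prime ∧ orderOf g = p ^ n

lemma quat_inv_eq {n : ℕ} [NeZero n] (w : QuaternionGroup n) (hw : orderOf w = 2) :
    w = QuaternionGroup.a ((n : ℕ) : ZMod (2 * n)) := by
  obtain (i | i) := w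
  · rw [QuaternionGroup.orderOf_a] at hw
    have hnpos : 0 < n := Nat.pos_of_ne_zero (NeZero.ne n)
    have hg : Nat.gcd (2 * n) i.val ∣ 2 * n := Nat.gcd_dvd_left _ _
    have h2n : 2 * n = Nat.gcd (2 * n) i.val * 2 := Nat.eq_mul_of_div_eq_right hg hw
    have hgn : Nat.gcd (2 * n) i.val = n := by omega
    have hdvd := Nat.gcd_dvd_right (2 * n) i.val
    rw [hgn] at hdvd
    have hlt : i.val < 2 * n := i.val_lt
    have hne : i.val ≠ 0 := by
      intro h0
      rw [h0, Nat.gcd_zero_right] at hgn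
      omega
    have hval : i.val = n := by
      obtain ⟨c, hc⟩ := hdvd
      have : c < 2 := by nlinarith
      interval_cases c <;> omega
    have : i = ((n : ℕ) : ZMod (2 * n)) := by
      conv_lhs => rw [← ZMod.natCast_zmod_val i, hval]
    rw [this]
  · rw [QuaternionGroup.orderOf_xa] at hw
    omega

lemma quat_unique_inv {n : ℕ} [NeZero n] (x y : QuaternionGroup n)
    (hx : orderOf x = 2) (hy : orderOf y = 2) : x = y := by
  rw [quat_inv_eq x hx, quat_inv_eq y hy]

open Pointwise

section Main

variable {G : Type*} [Group G] [Finite G]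

theorem EPPO_quaternion_sylow_two' 
    (hG : IsEPPOGroup G)
    (hsyl : ∀ P : Sylow 2 G, ∃ k : ℕ, 1 ≤ k ∧
      Nonempty ((P : Subgroup G) ≃* QuaternionGroup (2 ^ k))) :
    (∃ (q α β : ℕ), q.Prime ∧ Odd q ∧ Nat.card G = 2 ^ α * q ^ β ∧
      ∀ Q : Sylow q G, (Q : Subgroup G).Normal) ∧ IsSolvable G := by
  classical
  haveI : Fact (Nat.Prime 2) := ⟨Nat.prime_two⟩
  -- every non-odd-order element is a nontrivial 2-element
  have heo : ∀ g : G, ¬ Odd (orderOf g) → ∃ e, orderOf g = 2 ^ e ∧ 1 ≤ e := by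
    intro g hg
    obtain ⟨p, n, hp, hord⟩ := hG g
    rcases eq_or_ne p 2 with rfl | hp2
    · refine ⟨n, hord, ?_⟩
      by_contra h
      have : n = 0 := by omega
      rw [this, pow_zero] at hord
      exact hg (hord ▸ odd_one)
    · exfalso
      exact hg (hord ▸ Odd.pow (hp.odd_of_ne_two hp2))
  -- half-power of a 2-element is an involution
  have hhalf : ∀ (g : G) (e : ℕ), 1 ≤ e → orderOf g = 2 ^ e →
      orderOf (g ^ (2 ^ (e - 1))) = 2 := by
    intro g e he hord
    rw [orderOf_pow, hord]
    have h1 : Nat.gcd (2 ^ e) (2 ^ (e - 1)) = 2 ^ (e - 1) :=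
      Nat.gcd_eq_right (pow_dvd_pow 2 (by omega))
    rw [h1, Nat.pow_div (by omega) (by norm_num)]
    rw [show e - (e - 1) = 1 by omega, pow_one]
  -- centralizer of an involution is a 2-group
  have hcent : ∀ z : G, orderOf z = 2 → IsPGroup 2 (Subgroup.centralizer {z}) := by
    intro z hz
    rw [IsPGroup.iff_orderOf]
    intro g
    obtain ⟨p, n, hp, hord⟩ := hG (g : G)
    rcases eq_or_ne p 2 with rfl | hp2
    · exact ⟨n, by rw [← Subgroup.orderOf_coe g, hord]⟩
    · rcases Nat.eq_zero_or_pos n with rfl | hn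
      · exact ⟨0, by rw [← Subgroup.orderOf_coe g, hord]; norm_num⟩
      · exfalso
        obtain ⟨n', rfl⟩ : ∃ n', n = n' + 1 := ⟨n - 1, by omega⟩
        have hcom : Commute z (g : G) :=
          (Subgroup.mem_centralizer_singleton_iff.mp g.2).symm
        have hcop : Nat.Coprime (orderOf z) (orderOf (g : G)) := by
          rw [hz, hord]
          exact Nat.Coprime.pow_right _ (Nat.coprime_two_left.mpr (hp.odd_of_ne_two hp2))
        have hmul : orderOf (z * (g : G)) = 2 * p ^ (n' + 1) := by
          rw [Commute.orderOf_mul_eq_mul_orderOf_of_coprime hcom hcop, hz, hord]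
        obtain ⟨r, m, hr, hrm⟩ := hG (z * (g : G))
        rw [hmul] at hrm
        have h2 : 2 ∣ r ^ m := ⟨p ^ (n' + 1), hrm.symm⟩
        have hpd : p ∣ r ^ m := by
          refine ⟨2 * p ^ n', ?_⟩
          rw [← hrm, pow_succ]
          ring
        have h2r : r = 2 := ((Nat.prime_dvd_prime_iff_eq Nat.prime_two hr).mp
          (Nat.Prime.dvd_of_dvd_pow Nat.prime_two h2)).symm
        have hpr : p = r := (Nat.prime_dvd_prime_iff_eq hp hr).mp
          (Nat.Prime.dvd_of_dvd_pow hp hpd)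
        exact hp2 (hpr.trans h2r)
  -- unique involution in each Sylow 2-subgroup
  have hU : ∀ (P : Sylow 2 G) (x y : G), x ∈ P → y ∈ P →
      orderOf x = 2 → orderOf y = 2 → x = y := by
    intro P x y hx hy hx2 hy2
    obtain ⟨k, hk, ⟨e⟩⟩ := hsyl P
    haveI : NeZero (2 ^ k) := ⟨pow_ne_zero k two_ne_zero⟩
    have h1 : orderOf (e ⟨x, hx⟩) = 2 := by
      rw [MulEquiv.orderOf_eq, Subgroup.orderOf_mk, hx2]
    have h2 : orderOf (e ⟨y, hy⟩) = 2 := by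
      rw [MulEquiv.orderOf_eq, Subgroup.orderOf_mk, hy2]
    have := quat_unique_inv _ _ h1 h2
    have := e.injective this
    exact congrArg Subtype.val this
  -- the centralizer of an involution in a Sylow 2-subgroup is that Sylow subgroup
  have hsylC : ∀ (P : Sylow 2 G) (z : G), z ∈ P → orderOf z = 2 →
      Subgroup.centralizer {z} = (P : Subgroup G) := by
    intro P z hzP hz2
    have hPle : (P : Subgroup G) ≤ Subgroup.centralizer {z} := by
      intro x hxP
      rw [Subgroup.mem_centralizer_singleton_iff]
      have hconj : x * z * x⁻¹ ∈ P := P.1.mul_mem (P.1.mul_mem hxP hzP) (P.1.inv_mem hxP)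
      have hco : orderOf (x * z * x⁻¹) = 2 := by
        have : SemiconjBy x z (x * z * x⁻¹) := by
          unfold SemiconjBy; group
        rw [← this.orderOf_eq, hz2]
      have hcz := hU P _ _ hconj hzP hco hz2
      calc x * z = (x * z * x⁻¹) * x := by group
        _ = z * x := by rw [hcz]
    exact P.3 (hcent z hz2) hPle
  -- trivial intersection of distinct Sylow 2-subgroups
  have hTI : ∀ (P Q : Sylow 2 G) (g : G), g ∈ P → g ∈ Q → g ≠ 1 → P = Q := by
    intro P Q g hgP hgQ hg1
    obtain ⟨e, hge⟩ := (IsPGroup.iff_orderOf.mp P.2) ⟨g, hgP⟩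
    rw [Subgroup.orderOf_mk] at hge
    have he1 : 1 ≤ e := by
      by_contra h
      have : e = 0 := by omega
      rw [this, pow_zero, orderOf_eq_one_iff] at hge
      exact hg1 hge
    have ht2 : orderOf (g ^ (2 ^ (e - 1))) = 2 := hhalf g e he1 hge
    have htP : g ^ (2 ^ (e - 1)) ∈ P := P.1.pow_mem hgP _
    have htQ : g ^ (2 ^ (e - 1)) ∈ Q := Q.1.pow_mem hgQ _
    have := (hsylC P _ htP ht2).symm.trans (hsylC Q _ htQ ht2)
    exact Sylow.ext this

  -- fix a Sylow 2-subgroup, its cardinality, and its unique involution z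
  obtain ⟨P₀⟩ : Nonempty (Sylow 2 G) := inferInstance
  obtain ⟨k, hk, ⟨e₀⟩⟩ := hsyl P₀
  haveI : NeZero (2 ^ k) := ⟨pow_ne_zero k two_ne_zero⟩
  have cardP : Nat.card (P₀ : Subgroup G) = 2 ^ (k + 2) := by
    rw [Nat.card_congr e₀.toEquiv, Nat.card_eq_fintype_card, QuaternionGroup.card, pow_add]
    ring
  obtain ⟨ζ, hζ⟩ := exists_prime_orderOf_dvd_card' (G := (P₀ : Subgroup G)) 2
    (by rw [cardP]; exact dvd_pow_self 2 (by omega))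
  have hz2 : orderOf (ζ : G) = 2 := by rw [Subgroup.orderOf_coe, hζ]
  set z : G := (ζ : G) with hzdef
  have hzP : z ∈ P₀ := ζ.2
  have hzz : z * z = 1 := by
    have := pow_orderOf_eq_one z; rwa [hz2, sq] at this
  have hzi : z⁻¹ = z := inv_eq_of_mul_eq_one_right hzz
  set m := (P₀ : Subgroup G).index with hmdef
  have hm : Nat.card G = Nat.card (P₀ : Subgroup G) * m := (Subgroup.card_mul_index _).symm
  -- the Sylow 2-subgroup is self-normalizing
  have hnorm : Subgroup.normalizer (P₀ : Set G) = P₀ := by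
    refine le_antisymm ?_ Subgroup.le_normalizer
    intro g hg
    change g ∈ Subgroup.normalizer ((P₀ : Subgroup G) : Set G) at hg
    rw [Subgroup.mem_normalizer_iff] at hg
    have hzg : g * z * g⁻¹ ∈ P₀ := (hg z).mp hzP
    have hzg2 : orderOf (g * z * g⁻¹) = 2 := by
      have hsc : SemiconjBy g z (g * z * g⁻¹) := by unfold SemiconjBy; group
      rw [← hsc.orderOf_eq, hz2]
    have hzz' := hU P₀ _ _ hzg hzP hzg2 hz2
    have hgc : g ∈ Subgroup.centralizer {z} := by
      rw [Subgroup.mem_centralizer_singleton_iff]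
      calc g * z = (g * z * g⁻¹) * g := by group
        _ = z * g := by rw [hzz']
    rwa [hsylC P₀ z hzP hz2] at hgc
  have hSylCard : Nat.card (Sylow 2 G) = m := by
    rw [Sylow.card_eq_index_normalizer P₀, hnorm, hmdef]
  -- every non-odd element lies in some Sylow 2-subgroup
  have hmem_sylow : ∀ g : G, ¬ Odd (orderOf g) → ∃ Q : Sylow 2 G, g ∈ Q := by
    intro g hg
    obtain ⟨e, hge, he1⟩ := heo g hg
    have hpg : IsPGroup 2 (Subgroup.zpowers g) :=
      IsPGroup.of_card (by rw [Nat.card_zpowers, hge])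
    obtain ⟨Q, hQ⟩ := hpg.exists_le_sylow
    exact ⟨Q, hQ (Subgroup.mem_zpowers g)⟩
  set O : Set G := {g : G | Odd (orderOf g)} with hOdef
  set Oc : Set G := {g : G | ¬ Odd (orderOf g)} with hOcdef
  -- counting the 2-elements
  have key : ∀ Q : Sylow 2 G, Nat.card {x : G // x ∈ Q ∧ x ≠ 1} = 2 ^ (k + 2) - 1 := by
    intro Q
    have hQcard : Nat.card (Q : Subgroup G) = 2 ^ (k + 2) := by
      rw [Sylow.card_eq_multiplicity Q, ← Sylow.card_eq_multiplicity P₀, cardP]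
    have e1 : {x : G // x ∈ Q ∧ x ≠ 1} ≃ {y : (Q : Subgroup G) // ¬ (y = 1)} :=
      { toFun := fun x => ⟨⟨x.1, x.2.1⟩, fun h => x.2.2 (congrArg Subtype.val h)⟩
        invFun := fun y => ⟨y.1.1, y.1.2, fun h => y.2 (Subtype.ext h)⟩
        left_inv := fun x => rfl
        right_inv := fun y => rfl }
    rw [Nat.card_congr e1]
    letI : Fintype (Q : Subgroup G) := Fintype.ofFinite _
    rw [Nat.card_eq_fintype_card, Fintype.card_subtype_compl, Fintype.card_subtype_eq,
      ← Nat.card_eq_fintype_card, hQcard]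
  have hOc : Nat.card ↥Oc = m * (2 ^ (k + 2) - 1) := by
    let f : (Σ Q : Sylow 2 G, {x : G // x ∈ Q ∧ x ≠ 1}) → ↥Oc := fun s =>
      ⟨s.2.1, by
        obtain ⟨j, hj⟩ := IsPGroup.iff_orderOf.mp s.1.2 ⟨s.2.1, s.2.2.1⟩
        rw [Subgroup.orderOf_mk] at hj
        show ¬ Odd (orderOf (s.2.1 : G))
        intro hodd
        rcases Nat.eq_zero_or_pos j with rfl | hj1
        · rw [pow_zero, orderOf_eq_one_iff] at hj
          exact s.2.2.2 hj
        · rw [hj] at hodd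
          have hev : Even (2 ^ j) := (Nat.even_pow).mpr ⟨even_two, by omega⟩
          exact (Nat.not_odd_iff_even.mpr hev) hodd⟩
    have hbij : Function.Bijective f := by
      constructor
      · rintro ⟨Q, x, hxQ, hx1⟩ ⟨R, y, hyR, hy1⟩ hf
        have hval : x = y := congrArg Subtype.val hf
        subst hval
        obtain rfl : Q = R := hTI Q R x hxQ hyR hx1
        rfl
      · rintro ⟨g, hg⟩
        have hg' : ¬ Odd (orderOf g) := hg
        obtain ⟨Q, hQ⟩ := hmem_sylow g hg'
        have hg1 : g ≠ 1 := by
          intro h; subst h; exact hg' (by simp)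
        exact ⟨⟨Q, g, hQ, hg1⟩, rfl⟩
    rw [← Nat.card_congr (Equiv.ofBijective f hbij)]
    letI : Fintype (Sylow 2 G) := Fintype.ofFinite _
    letI : ∀ Q : Sylow 2 G, Fintype {x : G // x ∈ Q ∧ x ≠ 1} := fun Q => Fintype.ofFinite _
    rw [Nat.card_eq_fintype_card, Fintype.card_sigma]
    have hconst : ∀ Q : Sylow 2 G, Fintype.card {x : G // x ∈ Q ∧ x ≠ 1} = 2 ^ (k + 2) - 1 :=
      fun Q => by rw [← Nat.card_eq_fintype_card]; exact key Q
    simp_rw [hconst]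
    rw [Finset.sum_const, Finset.card_univ, ← Nat.card_eq_fintype_card, hSylCard, smul_eq_mul]
  have hOcard : Nat.card ↥O = m := by
    have hpart := Set.ncard_add_ncard_compl O
    have hcompl : Oᶜ = Oc := by
      ext g
      simp [hOdef, hOcdef]
    rw [hcompl] at hpart
    rw [Nat.card_coe_set_eq] at hOc
    rw [Nat.card_coe_set_eq]
    have hG2 : Nat.card G = 2 ^ (k + 2) * m := by rw [hm, cardP]
    rw [hOc, hG2] at hpart
    have h2 : m * (2 ^ (k + 2) - 1) = m * 2 ^ (k + 2) - m := by
      rw [Nat.mul_sub, mul_one]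
    have h3 : 2 ^ (k + 2) * m = m * 2 ^ (k + 2) := mul_comm _ _
    have h4 : m ≤ m * 2 ^ (k + 2) := Nat.le_mul_of_pos_right m (by positivity)
    rw [h2, h3] at hpart
    generalize hX : m * 2 ^ (k + 2) = X at hpart h4
    omega
  -- the involutions form the conjugacy class of z
  set I : Set G := {g : G | orderOf g = 2} with hIdef
  have hIorb : I = MulAction.orbit (ConjAct G) z := by
    ext t
    constructor
    · intro ht
      have ht' : orderOf t = 2 := ht
      have hpg : IsPGroup 2 (Subgroup.zpowers t) :=
        IsPGroup.of_card (n := 1) (by rw [Nat.card_zpowers, ht', pow_one])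
      obtain ⟨Q, hQ⟩ := hpg.exists_le_sylow
      have htQ : t ∈ Q := hQ (Subgroup.mem_zpowers t)
      obtain ⟨g, hg⟩ := MulAction.exists_smul_eq G P₀ Q
      have h1 : MulAut.conj g • z ∈ MulAut.conj g • (P₀ : Subgroup G) :=
        Subgroup.smul_mem_pointwise_smul z _ _ hzP
      rw [← Sylow.coe_subgroup_smul, hg] at h1
      have h2 : MulAut.conj g • z = g * z * g⁻¹ := rfl
      rw [h2] at h1
      have h3 : orderOf (g * z * g⁻¹) = 2 := by
        have hsc : SemiconjBy g z (g * z * g⁻¹) := by unfold SemiconjBy; group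
        rw [← hsc.orderOf_eq, hz2]
      have h4 := hU Q _ _ h1 htQ h3 ht'
      have : t ∈ MulAction.orbit (ConjAct G) z := by
        rw [ConjAct.mem_orbit_conjAct]
        exact (isConj_iff.mpr ⟨g, h4⟩).symm
      exact this
    · intro ht
      rw [ConjAct.mem_orbit_conjAct, isConj_comm, isConj_iff] at ht
      obtain ⟨c, hc⟩ := ht
      show orderOf t = 2
      have hsc : SemiconjBy c z (c * z * c⁻¹) := by unfold SemiconjBy; group
      rw [← hc, ← hsc.orderOf_eq, hz2]
  have hIcard : Nat.card ↥I = m := by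
    rw [hIorb, Nat.card_congr (MulAction.orbitEquivQuotientStabilizer (ConjAct G) z),
      ← Subgroup.index_eq_card]
    have h3 : (Subgroup.centralizer {z}).index = (MulAction.stabilizer (ConjAct G) z).index := by
      rw [Subgroup.centralizer_eq_comap_stabilizer]
      exact Subgroup.index_comap_of_surjective _ ConjAct.toConjAct.surjective
    rw [← h3, hsylC P₀ z hzP hz2, hmdef]
  -- product of two distinct involutions has odd order
  have hProdInv : ∀ t s : G, orderOf t = 2 → orderOf s = 2 → t ≠ s →
      Odd (orderOf (t * s)) := by
    intro t s ht hs hts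
    by_contra hodd
    obtain ⟨e, hge, he1⟩ := heo _ hodd
    have hz1o : orderOf ((t * s) ^ (2 ^ (e - 1))) = 2 := hhalf (t * s) e he1 hge
    set w := t * s with hw
    set z1 := w ^ (2 ^ (e - 1)) with hz1def
    have htt : t * t = 1 := by have := pow_orderOf_eq_one t; rwa [ht, sq] at this
    have hss : s * s = 1 := by have := pow_orderOf_eq_one s; rwa [hs, sq] at this
    have hz1z1 : z1 * z1 = 1 := by have := pow_orderOf_eq_one z1; rwa [hz1o, sq] at this
    have hti : t⁻¹ = t := inv_eq_of_mul_eq_one_right htt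
    have hsi : s⁻¹ = s := inv_eq_of_mul_eq_one_right hss
    have hz1i : z1⁻¹ = z1 := inv_eq_of_mul_eq_one_right hz1z1
    have hwinv : t * w * t⁻¹ = w⁻¹ := by
      rw [hw, mul_inv_rev, hti, hsi]
      calc t * (t * s) * t = (t * t) * s * t := by group
        _ = s * t := by rw [htt, one_mul]
    have htz1 : t * z1 * t⁻¹ = z1 := by
      have hcp : t * w ^ (2 ^ (e - 1)) * t⁻¹ = (t * w * t⁻¹) ^ (2 ^ (e - 1)) := by
        have := map_pow (MulAut.conj t) w (2 ^ (e - 1))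
        simpa [MulAut.conj_apply] using this
      rw [hz1def, hcp, hwinv, inv_pow, ← hz1def, hz1i]
    have htc : t ∈ Subgroup.centralizer {z1} := by
      rw [Subgroup.mem_centralizer_singleton_iff]
      calc t * z1 = (t * z1 * t⁻¹) * t := by group
        _ = z1 * t := by rw [htz1]
    have hwc : w ∈ Subgroup.centralizer {z1} := by
      rw [Subgroup.mem_centralizer_singleton_iff]
      exact Commute.pow_right (Commute.refl w) _
    have hsc : s ∈ Subgroup.centralizer {z1} := by
      have hstw : s = t * w := by rw [hw, ← mul_assoc, htt, one_mul]
      rw [hstw]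
      exact Subgroup.mul_mem _ htc hwc
    obtain ⟨Q, hQ⟩ := (hcent z1 hz1o).exists_le_sylow
    exact hts (hU Q t s (hQ htc) (hQ hsc) ht hs)
  -- the map t ↦ z * t is a bijection from involutions to odd-order elements
  have hIO : ∀ t : G, t ∈ I → z * t ∈ O := by
    intro t ht
    have ht' : orderOf t = 2 := ht
    show Odd (orderOf (z * t))
    rcases eq_or_ne z t with rfl | hne
    · rw [hzz]; simp
    · exact hProdInv z t hz2 ht' hne
  have hφbij : Function.Bijective (fun t : ↥I => (⟨z * t, hIO t t.2⟩ : ↥O)) := by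
    rw [Nat.bijective_iff_injective_and_card]
    constructor
    · intro a b hab
      have h := congrArg Subtype.val hab
      exact Subtype.ext (mul_left_cancel h)
    · rw [hIcard, hOcard]
  have hinv : ∀ a : G, Odd (orderOf a) → z * a * z = a⁻¹ := by
    intro a ha
    obtain ⟨t, htv⟩ := hφbij.2 ⟨a, ha⟩
    have hta : z * (t : G) = a := congrArg Subtype.val htv
    have htI : orderOf (t : G) = 2 := t.2
    have htt : (t : G) * (t : G) = 1 := by
      have := pow_orderOf_eq_one (t : G); rwa [htI, sq] at this
    have hti : (t : G)⁻¹ = (t : G) := inv_eq_of_mul_eq_one_right htt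
    rw [← hta, mul_inv_rev, hti, hzi]
    calc z * (z * (t : G)) * z = (z * z) * ((t : G) * z) := by group
      _ = (t : G) * z := by rw [hzz, one_mul]
  -- odd-order elements are closed under multiplication
  have hOmul : ∀ a b : G, a ∈ O → b ∈ O → a * b ∈ O := by
    intro a b ha hb
    have ha' : Odd (orderOf a) := ha
    have hb' : Odd (orderOf b) := hb
    show Odd (orderOf (a * b))
    have hconj : orderOf (z * (a * b) * z⁻¹) = orderOf (a * b) := by
      have hsc2 : SemiconjBy z (a * b) (z * (a * b) * z⁻¹) := by unfold SemiconjBy; group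
      rw [hsc2.orderOf_eq]
    rw [← hconj]
    have hsplit : z * (a * b) * z⁻¹ = (z * a) * (b * z) := by rw [hzi]; group
    rw [hsplit]
    have htt2 : (z * a) * (z * a) = 1 := by
      calc (z * a) * (z * a) = (z * a * z) * a := by group
        _ = a⁻¹ * a := by rw [hinv a ha']
        _ = 1 := inv_mul_cancel a
    have hss2 : (b * z) * (b * z) = 1 := by
      calc (b * z) * (b * z) = b * (z * b * z) := by group
        _ = b * b⁻¹ := by rw [hinv b hb']
        _ = 1 := mul_inv_cancel b
    rcases eq_or_ne (z * a) (b * z) with heq | hne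
    · rw [heq, hss2]; simp
    · have ht1 : z * a ≠ 1 := by
        intro h
        have h2 := eq_inv_of_mul_eq_one_right h
        rw [hzi] at h2
        rw [h2, hz2] at ha'
        simp [Nat.odd_iff] at ha'
      have hs1 : b * z ≠ 1 := by
        intro h
        have h2 := eq_inv_of_mul_eq_one_left h
        rw [hzi] at h2
        rw [h2, hz2] at hb'
        simp [Nat.odd_iff] at hb'
      have ht2 : orderOf (z * a) = 2 := orderOf_eq_prime (by rw [sq]; exact htt2) ht1
      have hs2 : orderOf (b * z) = 2 := orderOf_eq_prime (by rw [sq]; exact hss2) hs1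
      exact hProdInv _ _ ht2 hs2 hne

  -- the odd-order elements form an abelian normal subgroup
  let O' : Subgroup G :=
    { carrier := O
      one_mem' := by show Odd (orderOf (1 : G)); simp
      mul_mem' := fun {a b} ha hb => hOmul a b ha hb
      inv_mem' := fun {a} ha => by show Odd (orderOf a⁻¹); rw [orderOf_inv]; exact ha }
  have hO'normal : O'.Normal := by
    constructor
    intro n hn g
    show Odd (orderOf (g * n * g⁻¹))
    have hsc : SemiconjBy g n (g * n * g⁻¹) := by unfold SemiconjBy; group
    rw [← hsc.orderOf_eq]
    exact hn
  have hO'card : Nat.card O' = m := hOcard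
  have hcommO : ∀ a b : G, a ∈ O → b ∈ O → a * b = b * a := by
    have key2 : ∀ a b : G, a ∈ O → b ∈ O → a⁻¹ * b⁻¹ = b⁻¹ * a⁻¹ := by
      intro a b ha hb
      have hab : a * b ∈ O := hOmul a b ha hb
      have h1 : z * (a * b) * z = (a * b)⁻¹ := hinv _ hab
      have h2 : z * (a * b) * z = a⁻¹ * b⁻¹ := by
        have hmid : z * (a * b) * z = (z * a * z) * (z * b * z) := by
          calc z * (a * b) * z = z * a * (z * z) * b * z := by rw [hzz]; group
            _ = (z * a * z) * (z * b * z) := by group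
        rw [hmid, hinv a ha, hinv b hb]
      have h3 := h2.symm.trans h1
      rwa [mul_inv_rev] at h3
    intro a b ha hb
    have ha' : a⁻¹ ∈ O := by show Odd (orderOf a⁻¹); rw [orderOf_inv]; exact ha
    have hb' : b⁻¹ ∈ O := by show Odd (orderOf b⁻¹); rw [orderOf_inv]; exact hb
    have := key2 a⁻¹ b⁻¹ ha' hb'
    simpa using this
  -- m is odd
  have hm2 : ¬ 2 ∣ m := by
    intro h2
    obtain ⟨x, hx⟩ := exists_prime_orderOf_dvd_card' (G := O') 2 (by rw [hO'card]; exact h2)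
    have hxo : Odd (orderOf (x : G)) := x.2
    rw [Subgroup.orderOf_coe, hx] at hxo
    simp [Nat.odd_iff] at hxo
  -- m is a power of an odd prime q
  obtain ⟨q, β, hqprime, hqodd, hmq⟩ : ∃ q β : ℕ, q.Prime ∧ Odd q ∧ m = q ^ β := by
    rcases eq_or_ne m 1 with hm1 | hm1
    · exact ⟨3, 0, Nat.prime_three, ⟨1, rfl⟩, by rw [hm1, pow_zero]⟩
    · have hm0 : m ≠ 0 := by
        intro h0
        have : (0 : ℕ) < Nat.card G := Nat.card_pos
        rw [hm, h0, mul_zero] at this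
        omega
      have hqp : Nat.Prime m.minFac := Nat.minFac_prime hm1
      have hqdvd : m.minFac ∣ m := Nat.minFac_dvd m
      have hq2 : m.minFac ≠ 2 := fun h => hm2 (h ▸ hqdvd)
      haveI : Fact (Nat.Prime m.minFac) := ⟨hqp⟩
      obtain ⟨x, hx⟩ := exists_prime_orderOf_dvd_card' (G := O') m.minFac
        (by rw [hO'card]; exact hqdvd)
      have hxG : orderOf (x : G) = m.minFac := by rw [Subgroup.orderOf_coe, hx]
      have huniq : ∀ {r : ℕ}, r.Prime → r ∣ m → r = m.minFac := by
        intro r hr hrdvd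
        by_contra hrq
        haveI : Fact r.Prime := ⟨hr⟩
        obtain ⟨y, hy⟩ := exists_prime_orderOf_dvd_card' (G := O') r
          (by rw [hO'card]; exact hrdvd)
        have hyG : orderOf (y : G) = r := by rw [Subgroup.orderOf_coe, hy]
        have hcomm : Commute (x : G) (y : G) := hcommO _ _ x.2 y.2
        have hcop : Nat.Coprime (orderOf (x : G)) (orderOf (y : G)) := by
          rw [hxG, hyG]
          exact ((Nat.coprime_primes hqp hr).mpr (fun h => hrq h.symm))
        have hord : orderOf ((x : G) * (y : G)) = m.minFac * r := by
          rw [Commute.orderOf_mul_eq_mul_orderOf_of_coprime hcomm hcop, hxG, hyG]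
        obtain ⟨p, n, hp, hpn⟩ := hG ((x : G) * (y : G))
        rw [hord] at hpn
        have hqdp : m.minFac ∣ p ^ n := ⟨r, hpn.symm⟩
        have hrdp : r ∣ p ^ n := ⟨m.minFac, by rw [← hpn]; ring⟩
        have he1 := (Nat.prime_dvd_prime_iff_eq hqp hp).mp (hqp.dvd_of_dvd_pow hqdp)
        have he2 := (Nat.prime_dvd_prime_iff_eq hr hp).mp (hr.dvd_of_dvd_pow hrdp)
        exact hrq (he2.trans he1.symm)
      exact ⟨m.minFac, m.primeFactorsList.length, hqp, hqp.odd_of_ne_two hq2,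
        Nat.eq_prime_pow_of_unique_prime_dvd hm0 huniq⟩
  haveI : Fact q.Prime := ⟨hqprime⟩
  have hcardG : Nat.card G = 2 ^ (k + 2) * q ^ β := by rw [hm, cardP, hmq]
  -- O' is the unique Sylow q-subgroup
  have hQO : ∀ Q : Sylow q G, (Q : Subgroup G) = O' := by
    intro Q
    have hle : (Q : Subgroup G) ≤ O' := by
      intro x hx
      obtain ⟨j, hj⟩ := IsPGroup.iff_orderOf.mp Q.2 ⟨x, hx⟩
      rw [Subgroup.orderOf_mk] at hj
      show Odd (orderOf x)
      rw [hj]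
      exact hqodd.pow
    have hOp : IsPGroup q O' := IsPGroup.of_card (by rw [hO'card, hmq])
    exact (Q.3 hOp hle).symm
  have hsylq : ∀ Q : Sylow q G, (Q : Subgroup G).Normal := fun Q => (hQO Q) ▸ hO'normal
  refine ⟨⟨q, k + 2, β, hqprime, hqodd, hcardG, hsylq⟩, ?_⟩
  -- solvability
  have hOsolv : Group.IsSolvable O' :=
    isSolvable_of_comm (fun a b => Subtype.ext (hcommO a b a.2 b.2))
  have hquot : Group.IsSolvable (G ⧸ O') := by
    have h1 : Nat.card ↥O' * O'.index = Nat.card G := Subgroup.card_mul_index O'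
    rw [hO'card, hmq, hcardG] at h1
    have hqpos : 0 < q ^ β := pow_pos hqprime.pos β
    have hidx : O'.index = 2 ^ (k + 2) :=
      Nat.eq_of_mul_eq_mul_left hqpos (h1.trans (mul_comm _ _))
    have hcards : Nat.card (G ⧸ O') = 2 ^ (k + 2) := by
      rw [← Subgroup.index_eq_card, hidx]
    have hp2 : IsPGroup 2 (G ⧸ O') := IsPGroup.of_card hcards
    haveI := hp2.isNilpotent
    infer_instance
  exact solvable_of_ker_le_range O'.subtype (QuotientGroup.mk' O')
    (by rw [QuotientGroup.ker_mk', Subgroup.range_subtype])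



end Main

theorem EPPO_quaternion_sylow_two {G : Type*} [Group G] [Finite G]
    (hG : IsEPPOGroup G)
    (hsyl : ∀ P : Sylow 2 G, ∃ k : ℕ, 1 ≤ k ∧
      Nonempty ((P : Subgroup G) ≃* QuaternionGroup (2 ^ k))) :
    (∃ (q α β : ℕ), q.Prime ∧ Odd q ∧ Nat.card G = 2 ^ α * q ^ β ∧
      ∀ Q : Sylow q G, (Q : Subgroup G).Normal) ∧ IsSolvable G :=
  EPPO_quaternion_sylow_two' hG hsyl
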